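/- Let H be a Hilbert space and l a closed, densely defined, nonnegative Hermitian sesquilinear form on H with form domain D. Define Dom L = { v ∈ D : ∃ C_v ≥ 0, |l[u,v]| ≤ C_v ‖u‖ for all u ∈ D } and (u | L v) = l[u,v]. Suppose additionally l[u,u] ≥ c‖u‖² for some c > 0. Then L is a self-adjoint operator with L ≥ c, Dom(L^{1/2}) = D, and l[u,v] = (L^{1/2}u | L^{1/2}v) for u,v ∈ D. -/

import Mathlib

set_option synthInstance.maxHeartbeats 1000000
set_option maxHeartbeats 1000000

open scoped InnerProductSpace
open Filter

namespace Stmt18Aux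

structure Setup (H : Type*) [NormedAddCommGroup H] [InnerProductSpace ℂ H]
    [CompleteSpace H] where
  D : Submodule ℂ H
  hD : Dense (D : Set H)
  l : H → H → ℂ
  c : ℝ
  hc : 0 < c
  hsmul₁ : ∀ (a : ℂ) (u v : H), u ∈ D → v ∈ D → l (a • u) v = star a * l u v
  hadd₁ : ∀ u w v : H, u ∈ D → w ∈ D → v ∈ D → l (u + w) v = l u v + l w v
  hherm : ∀ u v : H, u ∈ D → v ∈ D → l v u = star (l u v)
  hcoercive : ∀ u ∈ D, c * ‖u‖ ^ 2 ≤ (l u u).re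
  hclosed : ∀ (un : ℕ → H), (∀ n, un n ∈ D) → ∀ x : H,
      Tendsto un atTop (nhds x) →
      (∀ ε : ℝ, 0 < ε → ∃ N : ℕ, ∀ m ≥ N, ∀ n ≥ N,
        (l (un m - un n) (un m - un n)).re < ε) →
      x ∈ D ∧ Tendsto (fun n => (l (un n - x) (un n - x)).re) atTop (nhds 0)

variable {H : Type*} [NormedAddCommGroup H] [InnerProductSpace ℂ H] [CompleteSpace H]
  (Γ : Setup H)

/-- The form domain as a type synonym, to be endowed with the form inner product. -/
def Setup.D1 : Type _ := ↥Γ.D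

instance : AddCommGroup Γ.D1 := inferInstanceAs (AddCommGroup ↥Γ.D)
instance : Module ℂ Γ.D1 := inferInstanceAs (Module ℂ ↥Γ.D)

/-- Inclusion of `D1` into `H` (as a linear map). -/
def Setup.toH : Γ.D1 →ₗ[ℂ] H := Γ.D.subtype

lemma Setup.toH_mem (u : Γ.D1) : Γ.toH u ∈ Γ.D := (show ↥Γ.D from u).2

lemma Setup.toH_inj : Function.Injective Γ.toH := Subtype.val_injective

/-- `D1` viewed from the submodule. -/
def Setup.mk1 (u : ↥Γ.D) : Γ.D1 := u

@[simp] lemma Setup.toH_mk1 (u : ↥Γ.D) : Γ.toH (Γ.mk1 u) = u := rfl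

noncomputable def Setup.core : InnerProductSpace.Core ℂ Γ.D1 where
  inner u v := Γ.l (Γ.toH u) (Γ.toH v)
  conj_inner_symm u v := (Γ.hherm _ _ (Γ.toH_mem v) (Γ.toH_mem u)).symm
  re_inner_nonneg u := le_trans (by have := Γ.hc; positivity) (Γ.hcoercive _ (Γ.toH_mem u))
  add_left u v w := Γ.hadd₁ _ _ _ (Γ.toH_mem u) (Γ.toH_mem v) (Γ.toH_mem w)
  smul_left u v r := Γ.hsmul₁ r _ _ (Γ.toH_mem u) (Γ.toH_mem v)
  definite u h := by
    have h2 := Γ.hcoercive _ (Γ.toH_mem u)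
    rw [show Γ.l (Γ.toH u) (Γ.toH u) = (0 : ℂ) from h] at h2
    simp only [Complex.zero_re] at h2
    have hc := Γ.hc
    have h3 : ‖Γ.toH u‖ ^ 2 ≤ 0 := by nlinarith [sq_nonneg ‖Γ.toH u‖]
    have h4 : Γ.toH u = 0 := by
      have := norm_nonneg (Γ.toH u)
      have : ‖Γ.toH u‖ = 0 := by nlinarith
      simpa using this
    exact Γ.toH_inj (by simpa using h4)

noncomputable instance : NormedAddCommGroup Γ.D1 := Γ.core.toNormedAddCommGroup
noncomputable instance : InnerProductSpace ℂ Γ.D1 := InnerProductSpace.ofCore Γ.core.toCore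

lemma Setup.inner_d1 (u v : Γ.D1) : ⟪u, v⟫_ℂ = Γ.l (Γ.toH u) (Γ.toH v) := rfl

lemma Setup.norm_d1_sq (u : Γ.D1) : ‖u‖ ^ 2 = (Γ.l (Γ.toH u) (Γ.toH u)).re := by
  rw [← Setup.inner_d1]
  exact (inner_self_eq_norm_sq (𝕜 := ℂ) u).symm

lemma Setup.coercive_d1 (u : Γ.D1) : Γ.c * ‖Γ.toH u‖ ^ 2 ≤ ‖u‖ ^ 2 := by
  rw [Γ.norm_d1_sq]
  exact Γ.hcoercive _ (Γ.toH_mem u)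

lemma Setup.toH_bound (u : Γ.D1) : ‖Γ.toH u‖ ≤ (Real.sqrt Γ.c)⁻¹ * ‖u‖ := by
  have hc := Γ.hc
  have h1 := Γ.coercive_d1 u
  have hs : (Real.sqrt Γ.c)⁻¹ ^ 2 = Γ.c⁻¹ := by
    rw [← Real.sqrt_inv, Real.sq_sqrt (by positivity)]
  have h2 : ‖Γ.toH u‖ ^ 2 ≤ ((Real.sqrt Γ.c)⁻¹ * ‖u‖) ^ 2 := by
    rw [mul_pow, hs, inv_mul_eq_div, le_div_iff₀ hc]
    nlinarith
  have h3 : (0:ℝ) ≤ (Real.sqrt Γ.c)⁻¹ * ‖u‖ := by positivity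
  nlinarith [norm_nonneg (Γ.toH u)]

/-- The inclusion as a continuous linear map. -/
noncomputable def Setup.incl : Γ.D1 →L[ℂ] H :=
  LinearMap.mkContinuous Γ.toH ((Real.sqrt Γ.c)⁻¹) Γ.toH_bound

@[simp] lemma Setup.incl_apply (u : Γ.D1) : Γ.incl u = Γ.toH u := rfl

instance : CompleteSpace Γ.D1 := by
  apply Metric.complete_of_cauchySeq_tendsto
  intro u hu
  have hcH : CauchySeq (fun n => Γ.incl (u n)) := hu.map Γ.incl.uniformContinuous
  obtain ⟨x, hx⟩ := cauchySeq_tendsto_of_complete hcH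
  have hmem : ∀ n, Γ.incl (u n) ∈ Γ.D := fun n => Γ.toH_mem _
  have key : ∀ m n : ℕ, (Γ.l (Γ.incl (u m) - Γ.incl (u n)) (Γ.incl (u m) - Γ.incl (u n))).re
      = ‖u m - u n‖ ^ 2 := by
    intro m n
    rw [Γ.norm_d1_sq (u m - u n)]
    congr 1
  have hcau : ∀ ε : ℝ, 0 < ε → ∃ N : ℕ, ∀ m ≥ N, ∀ n ≥ N,
      (Γ.l (Γ.incl (u m) - Γ.incl (u n)) (Γ.incl (u m) - Γ.incl (u n))).re < ε := by
    intro ε hε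
    obtain ⟨N, hN⟩ := Metric.cauchySeq_iff.mp hu (Real.sqrt ε) (Real.sqrt_pos.mpr hε)
    refine ⟨N, fun m hm n hn => ?_⟩
    rw [key m n]
    have h1 : dist (u m) (u n) < Real.sqrt ε := hN m hm n hn
    have h2 : ‖u m - u n‖ = dist (u m) (u n) := (dist_eq_norm _ _).symm
    rw [h2]
    have h0 : (0:ℝ) ≤ dist (u m) (u n) := dist_nonneg
    nlinarith [Real.sq_sqrt hε.le, Real.sqrt_nonneg ε]
  obtain ⟨hxD, hlim⟩ := Γ.hclosed _ hmem x hx hcau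
  set x1 : Γ.D1 := Γ.mk1 ⟨x, hxD⟩ with hx1
  refine ⟨x1, ?_⟩
  have keyn : ∀ n : ℕ, (Γ.l (Γ.incl (u n) - x) (Γ.incl (u n) - x)).re = ‖u n - x1‖ ^ 2 := by
    intro n
    rw [Γ.norm_d1_sq (u n - x1)]
    congr 1
  have hsq : Tendsto (fun n => ‖u n - x1‖ ^ 2) atTop (nhds 0) := by
    simpa only [keyn] using hlim
  have hnorm : Tendsto (fun n => ‖u n - x1‖) atTop (nhds 0) := by
    have := hsq.sqrt
    simp only [Real.sqrt_zero] at this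
    convert this using 2 with n
    rw [Real.sqrt_sq (norm_nonneg _)]
  exact tendsto_iff_norm_sub_tendsto_zero.mpr hnorm

/-- The Riesz representative map: `⟪T w, u⟫₁ = ⟪w, incl u⟫`. -/
noncomputable def Setup.T0 (w : H) : Γ.D1 :=
  (InnerProductSpace.toDual ℂ Γ.D1).symm ((innerSL ℂ w).comp Γ.incl)

lemma Setup.inner_T0 (w : H) (u : Γ.D1) : ⟪Γ.T0 w, u⟫_ℂ = ⟪w, Γ.incl u⟫_ℂ := by
  simp [Setup.T0, InnerProductSpace.toDual_symm_apply]

lemma Setup.T0_bound (w : H) : ‖Γ.T0 w‖ ≤ (Real.sqrt Γ.c)⁻¹ * ‖w‖ := by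
  have hc := Γ.hc
  have h1 : ‖Γ.T0 w‖ ^ 2 = (⟪Γ.T0 w, Γ.T0 w⟫_ℂ).re := (inner_self_eq_norm_sq (𝕜 := ℂ) _).symm
  have h2 : (⟪Γ.T0 w, Γ.T0 w⟫_ℂ).re ≤ ‖w‖ * ((Real.sqrt Γ.c)⁻¹ * ‖Γ.T0 w‖) := by
    rw [Γ.inner_T0]
    calc (⟪w, Γ.incl (Γ.T0 w)⟫_ℂ).re ≤ ‖(⟪w, Γ.incl (Γ.T0 w)⟫_ℂ)‖ := Complex.re_le_norm _
    _ ≤ ‖w‖ * ‖Γ.incl (Γ.T0 w)‖ := norm_inner_le_norm _ _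
    _ ≤ ‖w‖ * ((Real.sqrt Γ.c)⁻¹ * ‖Γ.T0 w‖) := by
        have := Γ.toH_bound (Γ.T0 w)
        have h0 : (0:ℝ) ≤ ‖w‖ := norm_nonneg _
        exact mul_le_mul_of_nonneg_left this h0
  rcases eq_or_lt_of_le (norm_nonneg (Γ.T0 w)) with h | h
  · rw [← h]; positivity
  · have h3 : ‖Γ.T0 w‖ * ‖Γ.T0 w‖ ≤ ((Real.sqrt Γ.c)⁻¹ * ‖w‖) * ‖Γ.T0 w‖ := by nlinarith
    exact le_of_mul_le_mul_right h3 h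

/-- The Riesz map as a continuous linear map `H →L D1`. -/
noncomputable def Setup.T : H →L[ℂ] Γ.D1 :=
  LinearMap.mkContinuous
    { toFun := Γ.T0
      map_add' := fun w₁ w₂ => ext_inner_right ℂ fun u => by
        rw [inner_add_left, Γ.inner_T0, Γ.inner_T0, Γ.inner_T0, inner_add_left]
      map_smul' := fun a w => ext_inner_right ℂ fun u => by
        rw [inner_smul_left, Γ.inner_T0, RingHom.id_apply, inner_smul_left, Γ.inner_T0] }
    ((Real.sqrt Γ.c)⁻¹) Γ.T0_bound

lemma Setup.inner_T (w : H) (u : Γ.D1) : ⟪Γ.T w, u⟫_ℂ = ⟪w, Γ.incl u⟫_ℂ := Γ.inner_T0 w u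

lemma Setup.T_ker (w : H) (h : Γ.T w = 0) : w = 0 := by
  have h1 : ∀ u : Γ.D1, ⟪w, Γ.incl u⟫_ℂ = 0 := by
    intro u
    rw [← Γ.inner_T, h, inner_zero_left]
  have h2 : ∀ x ∈ Γ.D, ⟪w, x⟫_ℂ = 0 := by
    intro x hx
    exact h1 (Γ.mk1 ⟨x, hx⟩)
  have h3 : ∀ x : H, ⟪w, x⟫_ℂ = 0 := by
    intro x
    have hcont : Continuous fun y : H => ⟪w, y⟫_ℂ := continuous_const.inner continuous_id
    have : Set.EqOn (fun y : H => ⟪w, y⟫_ℂ) (fun _ => (0:ℂ)) (Γ.D : Set H) := fun y hy => h2 y hy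
    have := Continuous.ext_on Γ.hD hcont continuous_const this
    exact congrFun this x
  simpa using h3 w

/-- `Tc = incl ∘ T : H →L H`. -/
noncomputable def Setup.Tc : H →L[ℂ] H := Γ.incl.comp Γ.T

lemma Setup.inner_Tc (x w : H) : ⟪x, Γ.Tc w⟫_ℂ = ⟪Γ.T x, Γ.T w⟫_ℂ := (Γ.inner_T x (Γ.T w)).symm

lemma Setup.Tc_pos : Γ.Tc.IsPositive := by
  constructor
  · intro x y
    simp only [ContinuousLinearMap.coe_coe]
    rw [← inner_conj_symm (Γ.Tc x) y, Γ.inner_Tc, Γ.inner_Tc, inner_conj_symm]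
  · intro x
    have : ⟪Γ.Tc x, x⟫_ℂ = star (⟪Γ.T x, Γ.T x⟫_ℂ) := by
      rw [← inner_conj_symm, Γ.inner_Tc]; rfl
    unfold ContinuousLinearMap.reApplyInnerSelf
    rw [this]
    rw [Complex.star_def, RCLike.conj_re]
    exact inner_self_nonneg

lemma Setup.Tc_ker (w : H) (h : Γ.Tc w = 0) : w = 0 := by
  apply Γ.T_ker
  exact Γ.toH_inj (by simpa [Setup.Tc] using h)

/-- The square root of `Tc`. -/
noncomputable def Setup.R : H →L[ℂ] H := CFC.sqrt Γ.Tc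

lemma Setup.R_nonneg : (0 : H →L[ℂ] H) ≤ Γ.R := CFC.sqrt_nonneg _

lemma Setup.R_pos : Γ.R.IsPositive := (ContinuousLinearMap.nonneg_iff_isPositive _).mp Γ.R_nonneg

lemma Setup.R_symm (x y : H) : ⟪Γ.R x, y⟫_ℂ = ⟪x, Γ.R y⟫_ℂ := by
  have := (ContinuousLinearMap.isSelfAdjoint_iff_isSymmetric).mp Γ.R_pos.isSelfAdjoint
  exact this x y

lemma Setup.R_sq (w : H) : Γ.R (Γ.R w) = Γ.Tc w := by
  have h : Γ.R * Γ.R = Γ.Tc := CFC.sqrt_mul_sqrt_self Γ.Tc ((ContinuousLinearMap.nonneg_iff_isPositive _).mpr Γ.Tc_pos)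
  calc Γ.R (Γ.R w) = (Γ.R * Γ.R) w := rfl
  _ = Γ.Tc w := by rw [h]

lemma Setup.R_ker (w : H) (h : Γ.R w = 0) : w = 0 := by
  apply Γ.Tc_ker
  rw [← Γ.R_sq, h, map_zero]

lemma Setup.R_inj : Function.Injective ⇑Γ.R := by
  intro a b h
  have h1 : Γ.R (a - b) = 0 := by rw [map_sub, h, sub_self]
  exact sub_eq_zero.mp (Γ.R_ker _ h1)

lemma Setup.norm_R_eq (w : H) : ‖Γ.R w‖ = ‖Γ.T w‖ := by
  have h1 : ‖Γ.R w‖ ^ 2 = ‖Γ.T w‖ ^ 2 := by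
    rw [← inner_self_eq_norm_sq (𝕜 := ℂ) (Γ.R w), ← inner_self_eq_norm_sq (𝕜 := ℂ) (Γ.T w)]
    rw [Γ.R_symm, Γ.R_sq, Γ.inner_Tc]
  calc ‖Γ.R w‖ = Real.sqrt (‖Γ.R w‖ ^ 2) := (Real.sqrt_sq (norm_nonneg _)).symm
  _ = Real.sqrt (‖Γ.T w‖ ^ 2) := by rw [h1]
  _ = ‖Γ.T w‖ := Real.sqrt_sq (norm_nonneg _)

lemma Setup.dist_R_T (a b : H) : dist (Γ.R a) (Γ.R b) = dist (Γ.T a) (Γ.T b) := by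
  rw [dist_eq_norm, dist_eq_norm, ← map_sub, ← map_sub, Γ.norm_R_eq]

lemma Setup.T_denseRange : DenseRange ⇑Γ.T := by
  set K : Submodule ℂ Γ.D1 := LinearMap.range (Γ.T : H →ₗ[ℂ] Γ.D1) with hK
  have horth : Kᗮ = ⊥ := by
    rw [Submodule.eq_bot_iff]
    intro x hx
    rw [Submodule.mem_orthogonal] at hx
    have h1 : ∀ w : H, ⟪Γ.T w, x⟫_ℂ = 0 := fun w => hx _ ⟨w, rfl⟩
    have h2 : ∀ w : H, ⟪w, Γ.incl x⟫_ℂ = 0 := fun w => by rw [← Γ.inner_T]; exact h1 w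
    have h3 : Γ.incl x = 0 := by
      have := h2 (Γ.incl x)
      rwa [inner_self_eq_zero] at this
    exact Γ.toH_inj (by simpa using h3)
  have htop : K.topologicalClosure = ⊤ := Submodule.topologicalClosure_eq_top_iff.mpr horth
  have hdense : Dense (K : Set Γ.D1) := by
    rw [Submodule.dense_iff_topologicalClosure_eq_top]
    exact htop
  have : Set.range ⇑Γ.T = (K : Set Γ.D1) := by
    ext x; simp [hK, LinearMap.mem_range]
  rw [DenseRange, this]
  exact hdense

lemma Setup.R_denseRange : DenseRange ⇑Γ.R := by
  set K : Submodule ℂ H := LinearMap.range (Γ.R : H →ₗ[ℂ] H) with hK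
  have horth : Kᗮ = ⊥ := by
    rw [Submodule.eq_bot_iff]
    intro x hx
    rw [Submodule.mem_orthogonal] at hx
    have h1 : ∀ w : H, ⟪Γ.R w, x⟫_ℂ = 0 := fun w => hx _ ⟨w, rfl⟩
    have h2 : Γ.R x = 0 := by
      have h2' : ∀ w : H, ⟪x, Γ.R w⟫_ℂ = 0 := fun w => by
        rw [← inner_conj_symm, h1 w, map_zero]
      have h3 : ⟪Γ.R x, Γ.R x⟫_ℂ = 0 := by
        rw [Γ.R_symm]; exact h2' (Γ.R x)
      rwa [inner_self_eq_zero] at h3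
    have := Γ.R_ker _ h2
    simp [this]
  have htop : K.topologicalClosure = ⊤ := Submodule.topologicalClosure_eq_top_iff.mpr horth
  have hdense : Dense (K : Set H) := by
    rw [Submodule.dense_iff_topologicalClosure_eq_top]
    exact htop
  have : Set.range ⇑Γ.R = (K : Set H) := by
    ext x; simp [hK, LinearMap.mem_range]
  rw [DenseRange, this]
  exact hdense

lemma exists_seq_of_denseRange {α β : Type*} [MetricSpace β] {f : α → β}
    (h : DenseRange f) (u : β) : ∃ y : ℕ → α, Tendsto (fun n => f (y n)) atTop (nhds u) := by
  have h1 : ∀ n : ℕ, ∃ w : α, dist u (f w) < 1 / (n + 1) := by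
    intro n
    exact h.exists_dist_lt u (by positivity : (0:ℝ) < 1 / (n + 1))
  choose y hy using h1
  refine ⟨y, Metric.tendsto_atTop.mpr fun ε hε => ?_⟩
  obtain ⟨N, hN⟩ := exists_nat_one_div_lt hε
  refine ⟨N, fun n hn => ?_⟩
  rw [dist_comm]
  calc dist u (f (y n)) < 1 / (n + 1) := hy n
  _ ≤ 1 / (N + 1) := by
      apply one_div_le_one_div_of_le (by positivity)
      exact_mod_cast add_le_add_left (Nat.cast_le.mpr hn) 1
  _ < ε := hN

lemma Setup.cauchy_R_of_T {y : ℕ → H} (h : CauchySeq fun n => Γ.T (y n)) :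
    CauchySeq fun n => Γ.R (y n) := by
  rw [Metric.cauchySeq_iff] at h ⊢
  intro ε hε
  obtain ⟨N, hN⟩ := h ε hε
  exact ⟨N, fun m hm n hn => by rw [Γ.dist_R_T]; exact hN m hm n hn⟩

lemma Setup.cauchy_T_of_R {y : ℕ → H} (h : CauchySeq fun n => Γ.R (y n)) :
    CauchySeq fun n => Γ.T (y n) := by
  rw [Metric.cauchySeq_iff] at h ⊢
  intro ε hε
  obtain ⟨N, hN⟩ := h ε hε
  exact ⟨N, fun m hm n hn => by rw [← Γ.dist_R_T]; exact hN m hm n hn⟩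

lemma Setup.lemA (u : Γ.D1) : ∃ a : H, Γ.R a = Γ.incl u ∧
    ∃ y : ℕ → H, Tendsto (fun n => Γ.T (y n)) atTop (nhds u) ∧
      Tendsto (fun n => Γ.R (y n)) atTop (nhds a) := by
  obtain ⟨y, hy⟩ := exists_seq_of_denseRange Γ.T_denseRange u
  have hcR : CauchySeq fun n => Γ.R (y n) := Γ.cauchy_R_of_T hy.cauchySeq
  obtain ⟨a, ha⟩ := cauchySeq_tendsto_of_complete hcR
  refine ⟨a, ?_, y, hy, ha⟩
  have h1 : Tendsto (fun n => Γ.R (Γ.R (y n))) atTop (nhds (Γ.R a)) :=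
    (Γ.R.continuous.tendsto a).comp ha
  have h2 : (fun n => Γ.R (Γ.R (y n))) = fun n => Γ.incl (Γ.T (y n)) := by
    funext n; exact Γ.R_sq (y n)
  have h3 : Tendsto (fun n => Γ.incl (Γ.T (y n))) atTop (nhds (Γ.incl u)) :=
    (Γ.incl.continuous.tendsto u).comp hy
  exact tendsto_nhds_unique (h2 ▸ h1) h3

lemma Setup.lemB (w : H) : Γ.R w ∈ Γ.D := by
  obtain ⟨y, hy⟩ := exists_seq_of_denseRange Γ.R_denseRange w
  have hcT : CauchySeq fun n => Γ.T (y n) := Γ.cauchy_T_of_R hy.cauchySeq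
  obtain ⟨u, hu⟩ := cauchySeq_tendsto_of_complete hcT
  have h1 : Tendsto (fun n => Γ.incl (Γ.T (y n))) atTop (nhds (Γ.incl u)) :=
    (Γ.incl.continuous.tendsto u).comp hu
  have h2 : (fun n => Γ.incl (Γ.T (y n))) = fun n => Γ.R (Γ.R (y n)) := by
    funext n; exact (Γ.R_sq (y n)).symm
  have h3 : Tendsto (fun n => Γ.R (Γ.R (y n))) atTop (nhds (Γ.R w)) :=
    (Γ.R.continuous.tendsto w).comp hy
  have h4 : Γ.incl u = Γ.R w := tendsto_nhds_unique (h2 ▸ h1) h3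
  rw [← h4]
  exact Γ.toH_mem u

lemma Setup.lemC (a b : H) (u v : Γ.D1) (ha : Γ.R a = Γ.incl u) (hb : Γ.R b = Γ.incl v) :
    ⟪a, b⟫_ℂ = ⟪u, v⟫_ℂ := by
  obtain ⟨a', ha', y, hyT, hyR⟩ := Γ.lemA u
  obtain ⟨b', hb', z, hzT, hzR⟩ := Γ.lemA v
  have haa : a' = a := Γ.R_inj (ha'.trans ha.symm)
  have hbb : b' = b := Γ.R_inj (hb'.trans hb.symm)
  subst haa; subst hbb
  have k1 : Tendsto (fun n => ⟪Γ.R (y n), Γ.R (z n)⟫_ℂ) atTop (nhds ⟪a', b'⟫_ℂ) :=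
    hyR.inner hzR
  have k2 : (fun n => ⟪Γ.R (y n), Γ.R (z n)⟫_ℂ) = fun n => ⟪Γ.T (y n), Γ.T (z n)⟫_ℂ := by
    funext n
    rw [Γ.R_symm, Γ.R_sq]
    exact (Γ.inner_T (y n) (Γ.T (z n))).symm
  have k3 : Tendsto (fun n => ⟪Γ.T (y n), Γ.T (z n)⟫_ℂ) atTop (nhds ⟪u, v⟫_ℂ) :=
    hyT.inner hzT
  exact tendsto_nhds_unique (k2 ▸ k1) k3

lemma Setup.hsmul₂' (a : ℂ) (u v : H) (hu : u ∈ Γ.D) (hv : v ∈ Γ.D) :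
    Γ.l u (a • v) = a * Γ.l u v := by
  have h1 : Γ.l u (a • v) = star (Γ.l (a • v) u) :=
    Γ.hherm (a • v) u (Γ.D.smul_mem a hv) hu
  rw [h1, Γ.hsmul₁ a v u hv hu, star_mul', star_star, ← Γ.hherm v u hv hu]

lemma Setup.hadd₂' (u v w : H) (hu : u ∈ Γ.D) (hv : v ∈ Γ.D) (hw : w ∈ Γ.D) :
    Γ.l u (v + w) = Γ.l u v + Γ.l u w := by
  have h1 : Γ.l u (v + w) = star (Γ.l (v + w) u) :=
    Γ.hherm (v + w) u (Γ.D.add_mem hv hw) hu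
  rw [h1, Γ.hadd₁ v w u hv hw hu, star_add, ← Γ.hherm v u hv hu, ← Γ.hherm w u hw hu]

lemma Setup.exists_R_eq (v : ↥Γ.D) : ∃ a : H, Γ.R a = (v : H) := by
  obtain ⟨a, ha, -⟩ := Γ.lemA (Γ.mk1 v)
  exact ⟨a, ha⟩

/-- The square root operator `S` as a function on `↥D`. -/
noncomputable def Setup.Sfun0 (v : ↥Γ.D) : H := Classical.choose (Γ.exists_R_eq v)

lemma Setup.R_Sfun0 (v : ↥Γ.D) : Γ.R (Γ.Sfun0 v) = (v : H) :=
  Classical.choose_spec (Γ.exists_R_eq v)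

/-- The square root operator as a partial linear map with domain `D`. -/
noncomputable def Setup.S : H →ₗ.[ℂ] H :=
  ⟨Γ.D,
    { toFun := Γ.Sfun0
      map_add' := fun x y => by
        apply Γ.R_inj
        rw [Γ.R_Sfun0, map_add, Γ.R_Sfun0, Γ.R_Sfun0]
        rfl
      map_smul' := fun a x => by
        apply Γ.R_inj
        rw [Γ.R_Sfun0, RingHom.id_apply, map_smul, Γ.R_Sfun0]
        rfl }⟩

lemma Setup.S_domain : Γ.S.domain = Γ.D := rfl

lemma Setup.R_S (v : Γ.S.domain) : Γ.R (Γ.S v) = (v : H) := Γ.R_Sfun0 v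

lemma Setup.S_symm (x y : Γ.S.domain) : ⟪Γ.S x, (y : H)⟫_ℂ = ⟪(x : H), Γ.S y⟫_ℂ := by
  conv_lhs => rw [← Γ.R_S y]
  conv_rhs => rw [← Γ.R_S x]
  rw [Γ.R_symm]

lemma Setup.S_surj (w : H) : ∃ x : Γ.S.domain, Γ.S x = w := by
  refine ⟨⟨Γ.R w, Γ.lemB w⟩, ?_⟩
  apply Γ.R_inj
  rw [Γ.R_S]

/-- A symmetric densely defined surjective partial linear operator is self-adjoint. -/
lemma selfadjoint_of_symm_surj (A : H →ₗ.[ℂ] H) (hd : Dense (A.domain : Set H))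
    (hsymm : ∀ x y : A.domain, ⟪A x, (y : H)⟫_ℂ = ⟪(x : H), A y⟫_ℂ)
    (hsurj : ∀ w : H, ∃ x : A.domain, A x = w) : A.adjoint = A := by
  have hfa : A.IsFormalAdjoint A := hsymm
  have hle : A ≤ A.adjoint := hfa.le_adjoint hd
  have hdom : A.adjoint.domain ≤ A.domain := by
    intro yv hyv
    set g := A.adjoint ⟨yv, hyv⟩ with hg
    obtain ⟨x₀, hx₀⟩ := hsurj g
    have hy : ∀ u : A.domain, ⟪A u, yv⟫_ℂ = ⟪(u : H), g⟫_ℂ := by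
      intro u
      have := (LinearPMap.adjoint_isFormalAdjoint hd) ⟨yv, hyv⟩ u
      rw [← inner_conj_symm, ← this, inner_conj_symm]
    have hz : ∀ u : A.domain, ⟪A u, yv - (x₀ : H)⟫_ℂ = 0 := by
      intro u
      rw [inner_sub_right, hy u, ← hx₀, hsymm u x₀, sub_self]
    obtain ⟨u, hu⟩ := hsurj (yv - (x₀ : H))
    have h0 : yv - (x₀ : H) = 0 := by
      have := hz u
      rw [hu, inner_self_eq_zero] at this
      exact this
    have : yv = (x₀ : H) := by rwa [sub_eq_zero] at h0
    rw [this]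
    exact x₀.2
  apply le_antisymm _ hle
  refine ⟨hdom, fun x y hxy => ?_⟩
  refine LinearPMap.adjoint_apply_eq hd x (fun u => ?_)
  rw [hsymm y u, hxy]

lemma Setup.S_adjoint : Γ.S.adjoint = Γ.S :=
  selfadjoint_of_symm_surj Γ.S (by rw [Γ.S_domain]; exact Γ.hD) Γ.S_symm Γ.S_surj

lemma Setup.S_posre (u : Γ.S.domain) : 0 ≤ (⟪(u : H), Γ.S u⟫_ℂ).re := by
  have h := Γ.R_pos.re_inner_nonneg_left (Γ.S u)
  rw [← Γ.R_S u]
  exact h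

lemma Setup.S_form (u v : Γ.S.domain) : Γ.l (u : H) (v : H) = ⟪Γ.S u, Γ.S v⟫_ℂ := by
  have := Γ.lemC (Γ.S u) (Γ.S v) (Γ.mk1 ⟨(u : H), u.2⟩) (Γ.mk1 ⟨(v : H), v.2⟩)
    (Γ.R_S u) (Γ.R_S v)
  rw [this, Γ.inner_d1]
  rfl

/-- Domain of `L`: the range of `Tc`. -/
noncomputable def Setup.LD : Submodule ℂ H := LinearMap.range (Γ.Tc : H →ₗ[ℂ] H)

lemma Setup.exists_Tc_eq (v : ↥Γ.LD) : ∃ w : H, Γ.Tc w = (v : H) := v.2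

lemma Setup.Tc_inj : Function.Injective ⇑Γ.Tc := by
  intro a b h
  have h1 : Γ.Tc (a - b) = 0 := by rw [map_sub, h, sub_self]
  exact sub_eq_zero.mp (Γ.Tc_ker _ h1)

noncomputable def Setup.Lfun0 (v : ↥Γ.LD) : H := Classical.choose (Γ.exists_Tc_eq v)

lemma Setup.Tc_Lfun0 (v : ↥Γ.LD) : Γ.Tc (Γ.Lfun0 v) = (v : H) :=
  Classical.choose_spec (Γ.exists_Tc_eq v)

/-- The representing operator `L` as a partial linear map. -/
noncomputable def Setup.L : H →ₗ.[ℂ] H :=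
  ⟨Γ.LD,
    { toFun := Γ.Lfun0
      map_add' := fun x y => by
        apply Γ.Tc_inj
        rw [Γ.Tc_Lfun0, map_add, Γ.Tc_Lfun0, Γ.Tc_Lfun0]
        rfl
      map_smul' := fun a x => by
        apply Γ.Tc_inj
        rw [Γ.Tc_Lfun0, RingHom.id_apply, map_smul, Γ.Tc_Lfun0]
        rfl }⟩

lemma Setup.L_domain : Γ.L.domain = Γ.LD := rfl

lemma Setup.Tc_L (v : Γ.L.domain) : Γ.Tc (Γ.L v) = (v : H) := Γ.Tc_Lfun0 v

lemma Setup.L_surj (w : H) : ∃ x : Γ.L.domain, Γ.L x = w := by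
  refine ⟨⟨Γ.Tc w, ⟨w, rfl⟩⟩, ?_⟩
  apply Γ.Tc_inj
  rw [Γ.Tc_L]

lemma Setup.LD_sub_D (v : H) (hv : v ∈ Γ.LD) : v ∈ Γ.D := by
  obtain ⟨w, hw⟩ := hv
  rw [← hw]
  exact Γ.toH_mem (Γ.T w)

lemma Setup.L_repr (u : H) (hu : u ∈ Γ.D) (v : Γ.L.domain) :
    Γ.l u (v : H) = ⟪u, Γ.L v⟫_ℂ := by
  set w := Γ.L v with hwdef
  have hw : Γ.Tc w = (v : H) := Γ.Tc_L v
  set u1 : Γ.D1 := Γ.mk1 ⟨u, hu⟩ with hu1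
  have h1 : Γ.l u (v : H) = ⟪u1, Γ.T w⟫_ℂ := by
    rw [Γ.inner_d1, ← hw]
    rfl
  rw [h1, ← inner_conj_symm, Γ.inner_T, inner_conj_symm]
  rfl

lemma Setup.L_symm (x y : Γ.L.domain) : ⟪Γ.L x, (y : H)⟫_ℂ = ⟪(x : H), Γ.L y⟫_ℂ := by
  have hx : (x : H) ∈ Γ.D := Γ.LD_sub_D _ x.2
  have hy : (y : H) ∈ Γ.D := Γ.LD_sub_D _ y.2
  rw [← Γ.L_repr _ hx y, ← inner_conj_symm, ← Γ.L_repr _ hy x]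
  exact (Γ.hherm _ _ hy hx).symm

lemma Setup.LD_dense : Dense ((Γ.LD : Submodule ℂ H) : Set H) := by
  have horth : Γ.LDᗮ = ⊥ := by
    rw [Submodule.eq_bot_iff]
    intro x hx
    rw [Submodule.mem_orthogonal] at hx
    have h1 : ∀ w : H, ⟪Γ.Tc w, x⟫_ℂ = 0 := fun w => hx _ ⟨w, rfl⟩
    have h2 : ⟪Γ.T x, Γ.T x⟫_ℂ = 0 := by
      rw [← Γ.inner_Tc, ← inner_conj_symm, h1 x, map_zero]
    rw [inner_self_eq_zero] at h2
    exact Γ.T_ker x h2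
  rw [Submodule.dense_iff_topologicalClosure_eq_top]
  exact Submodule.topologicalClosure_eq_top_iff.mpr horth

lemma Setup.L_adjoint : Γ.L.adjoint = Γ.L :=
  selfadjoint_of_symm_surj Γ.L Γ.LD_dense Γ.L_symm Γ.L_surj

lemma Setup.L_coercive (v : Γ.L.domain) : Γ.c * ‖(v : H)‖ ^ 2 ≤ (⟪(v : H), Γ.L v⟫_ℂ).re := by
  have hv : (v : H) ∈ Γ.D := Γ.LD_sub_D _ v.2
  rw [← Γ.L_repr _ hv v]
  exact Γ.hcoercive _ hv

lemma Setup.mem_LD_iff (v : H) :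
    v ∈ Γ.LD ↔ (v ∈ Γ.D ∧ ∃ C : ℝ, 0 ≤ C ∧ ∀ u ∈ Γ.D, ‖Γ.l u v‖ ≤ C * ‖u‖) := by
  constructor
  · rintro ⟨w, hw⟩
    have hvD : v ∈ Γ.D := Γ.LD_sub_D v ⟨w, hw⟩
    refine ⟨hvD, ‖w‖, norm_nonneg w, fun u hu => ?_⟩
    set u1 : Γ.D1 := Γ.mk1 ⟨u, hu⟩ with hu1
    have h1 : Γ.l u v = ⟪u1, Γ.T w⟫_ℂ := by
      rw [Γ.inner_d1, ← hw]
      rfl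
    rw [h1, ← inner_conj_symm, Γ.inner_T, RCLike.norm_conj]
    calc ‖⟪w, Γ.incl u1⟫_ℂ‖ ≤ ‖w‖ * ‖Γ.incl u1‖ := norm_inner_le_norm _ _
    _ = ‖w‖ * ‖u‖ := rfl
  · rintro ⟨hvD, C, hC, hbound⟩
    -- build the continuous functional `u ↦ l v u` on `D` with H-norm, extend, Riesz
    have hlin : ∃ f0 : ↥Γ.D →L[ℂ] ℂ, ∀ u : ↥Γ.D, f0 u = Γ.l v (u : H) := by
      refine ⟨LinearMap.mkContinuous
        { toFun := fun u => Γ.l v (u : H)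
          map_add' := fun a b => Γ.hadd₂' v _ _ hvD a.2 b.2
          map_smul' := fun a x => by
            simp only [RingHom.id_apply]
            exact Γ.hsmul₂' a v _ hvD x.2 } C (fun u => ?_), fun u => rfl⟩
      show ‖Γ.l v (u : H)‖ ≤ C * ‖u‖
      have h2 : Γ.l v (u : H) = star (Γ.l (u : H) v) := Γ.hherm _ _ u.2 hvD
      rw [h2, norm_star]
      exact hbound _ u.2
    obtain ⟨f0, hf0⟩ := hlin
    set F : H →L[ℂ] ℂ :=
      f0.extend Γ.D.subtypeL with hF
    have hFeq : ∀ u : ↥Γ.D, F (u : H) = Γ.l v (u : H) := by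
      intro u
      have h3 := ContinuousLinearMap.extend_eq f0 (e := Γ.D.subtypeL) Γ.hD.denseRange_val
        isUniformEmbedding_subtype_val.isUniformInducing u
      exact h3.trans (hf0 u)
    set w : H := (InnerProductSpace.toDual ℂ H).symm F with hwdef
    have hwinner : ∀ x : H, ⟪w, x⟫_ℂ = F x := fun x =>
      InnerProductSpace.toDual_symm_apply
    have hTw : Γ.T w = Γ.mk1 ⟨v, hvD⟩ := by
      apply ext_inner_right ℂ
      intro u1
      rw [Γ.inner_T, hwinner, Γ.inner_d1]
      have : Γ.incl u1 = ((show ↥Γ.D from u1 : ↥Γ.D) : H) := rfl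
      rw [this, hFeq]
      rfl
    refine ⟨w, ?_⟩
    show Γ.toH (Γ.T w) = v
    rw [hTw]
    rfl

lemma Setup.L_eq_SS (v : Γ.L.domain) (h₁ : (v : H) ∈ Γ.S.domain)
    (h₂ : Γ.S ⟨(v : H), h₁⟩ ∈ Γ.S.domain) :
    Γ.L v = Γ.S ⟨Γ.S ⟨(v : H), h₁⟩, h₂⟩ := by
  have hw : Γ.Tc (Γ.L v) = (v : H) := Γ.Tc_L v
  have ha : Γ.R (Γ.S ⟨(v : H), h₁⟩) = (v : H) := Γ.R_S ⟨(v : H), h₁⟩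
  have haRw : Γ.S ⟨(v : H), h₁⟩ = Γ.R (Γ.L v) := by
    apply Γ.R_inj
    rw [ha, ← hw, ← Γ.R_sq]
  apply Γ.R_inj
  rw [Γ.R_S ⟨Γ.S ⟨(v : H), h₁⟩, h₂⟩]
  show Γ.R (Γ.L v) = Γ.S ⟨(v : H), h₁⟩
  exact haRw.symm

end Stmt18Aux


/-- first representation theorem, coercive case: a closed, densely
defined, Hermitian sesquilinear form `l` on a dense form domain `D` with
`l[u,u] ≥ c‖u‖²`, `c > 0`, is represented by a self-adjoint operator `L ≥ c`
with `Dom L = {v ∈ D : |l[u,v]| ≤ C_v ‖u‖}` and `(u | L v) = l[u,v]`; moreover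
`Dom L^{1/2} = D` and `l[u,v] = (L^{1/2}u | L^{1/2}v)`, the square root
`S = L^{1/2}` being a nonnegative self-adjoint operator with `S² ⊇ L`. -/
theorem stmt_18
    {H : Type*} [NormedAddCommGroup H] [InnerProductSpace ℂ H] [CompleteSpace H]
    (D : Submodule ℂ H) (hD : Dense (D : Set H))
    (l : H → H → ℂ) (c : ℝ) (hc : 0 < c)
    (hsmul₁ : ∀ (a : ℂ) (u v : H), u ∈ D → v ∈ D → l (a • u) v = star a * l u v)
    (hadd₁ : ∀ u w v : H, u ∈ D → w ∈ D → v ∈ D → l (u + w) v = l u v + l w v)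
    (hsmul₂ : ∀ (a : ℂ) (u v : H), u ∈ D → v ∈ D → l u (a • v) = a * l u v)
    (hadd₂ : ∀ u v w : H, u ∈ D → v ∈ D → w ∈ D → l u (v + w) = l u v + l u w)
    (hherm : ∀ u v : H, u ∈ D → v ∈ D → l v u = star (l u v))
    (hcoercive : ∀ u ∈ D, c * ‖u‖ ^ 2 ≤ (l u u).re)
    (hclosed : ∀ (un : ℕ → H), (∀ n, un n ∈ D) → ∀ x : H,
      Tendsto un atTop (nhds x) →
      (∀ ε : ℝ, 0 < ε → ∃ N : ℕ, ∀ m ≥ N, ∀ n ≥ N,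
        (l (un m - un n) (un m - un n)).re < ε) →
      x ∈ D ∧ Tendsto (fun n => (l (un n - x) (un n - x)).re) atTop (nhds 0)) :
    ∃ L : H →ₗ.[ℂ] H,
      (∀ v : H, v ∈ L.domain ↔
        (v ∈ D ∧ ∃ C : ℝ, 0 ≤ C ∧ ∀ u ∈ D, ‖l u v‖ ≤ C * ‖u‖)) ∧
      L.adjoint = L ∧
      (∀ u ∈ D, ∀ v : L.domain, l u (v : H) = ⟪u, L v⟫_ℂ) ∧
      (∀ v : L.domain, c * ‖(v : H)‖ ^ 2 ≤ (⟪(v : H), L v⟫_ℂ).re) ∧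
      ∃ S : H →ₗ.[ℂ] H,
        S.domain = D ∧
        S.adjoint = S ∧
        (∀ u : S.domain, 0 ≤ (⟪(u : H), S u⟫_ℂ).re) ∧
        (∀ u v : S.domain, l (u : H) (v : H) = ⟪S u, S v⟫_ℂ) ∧
        (∀ v : L.domain, (v : H) ∈ S.domain) ∧
        (∀ (v : L.domain) (h₁ : (v : H) ∈ S.domain)
            (h₂ : S ⟨(v : H), h₁⟩ ∈ S.domain),
          L v = S ⟨S ⟨(v : H), h₁⟩, h₂⟩) := by
  classical
  let Γ : Stmt18Aux.Setup H :=
    ⟨D, hD, l, c, hc, hsmul₁, hadd₁, hherm, hcoercive, hclosed⟩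
  refine ⟨Γ.L, fun v => Γ.mem_LD_iff v, Γ.L_adjoint,
    fun u hu v => Γ.L_repr u hu v, Γ.L_coercive, Γ.S, rfl, Γ.S_adjoint,
    Γ.S_posre, Γ.S_form, fun v => Γ.LD_sub_D _ v.2, Γ.L_eq_SS⟩
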